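/- Let f : ℝ^m → ℝ be C¹ with at most countably many critical points (for example, a Morse function), let α, β ∈ (0,1), δ₀ > 0, and let (x_n) be the backtracking gradient descent sequence from an arbitrary initial point x₀ ∈ ℝ^m. Then either (x_n) converges to a critical point of f, or (x_n) diverges to infinity (tends to the cocompact filter of ℝ^m). If moreover f has compact sublevel sets {x : f(x) ≤ c}, then only the former alternative happens: (x_n) converges to a critical point of f. -/

import Mathlib

open Gradient Filter Topology RealInnerProductSpace

/-- Armijo's condition at `x` for step size `δ`:
`f(x − δ∇f(x)) − f(x) ≤ −αδ‖∇f(x)‖²`. -/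
def ArmijoCondition {E : Type*} [NormedAddCommGroup E] [InnerProductSpace ℝ E]
    [CompleteSpace E] (f : E → ℝ) (α δ : ℝ) (x : E) : Prop :=
  f (x - δ • ∇ f x) - f x ≤ -(α * δ * ‖∇ f x‖ ^ 2)

/-- `δsel` is the backtracking learning rate function: `δsel x` is the largest number of the
form `β^j δ₀` (i.e. the one with the smallest exponent `j`) satisfying Armijo's condition
at `x`. -/
def IsBacktrackingRate {E : Type*} [NormedAddCommGroup E] [InnerProductSpace ℝ E]
    [CompleteSpace E] (f : E → ℝ) (α β δ₀ : ℝ) (δsel : E → ℝ) : Prop :=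
  ∀ x : E, ∃ j : ℕ, δsel x = β ^ j * δ₀ ∧ ArmijoCondition f α (δsel x) x ∧
    ∀ i < j, ¬ ArmijoCondition f α (β ^ i * δ₀) x

variable {E : Type*} [NormedAddCommGroup E] [InnerProductSpace ℝ E] [CompleteSpace E]


lemma my_fderiv_apply (f : E → ℝ) (y v : E) : fderiv ℝ f y v = ⟪∇ f y, v⟫ := by
  rw [gradient, InnerProductSpace.toDual_symm_apply]

lemma my_grad_sub_norm (f : E → ℝ) (y z : E) :
    ‖∇ f y - ∇ f z‖ = ‖fderiv ℝ f y - fderiv ℝ f z‖ := by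
  rw [gradient, gradient, ← LinearIsometryEquiv.map_sub, LinearIsometryEquiv.norm_map]

lemma my_grad_continuous {f : E → ℝ} (hf : ContDiff ℝ 1 f) : Continuous (∇ f) := by
  have h := hf.continuous_fderiv one_ne_zero
  exact (InnerProductSpace.toDual ℝ E).symm.continuous.comp h


lemma my_armijo_local {f : E → ℝ} (hf : ContDiff ℝ 1 f) {α : ℝ} (hα0 : 0 < α) (hα1 : α < 1)
    {z : E} (hz : ∇ f z ≠ 0) :
    ∃ ε > 0, ∃ δ' > 0, ∀ y, dist y z < ε →
      (‖∇ f z‖ / 2 ≤ ‖∇ f y‖ ∧ ∀ δ, 0 < δ → δ ≤ δ' → ArmijoCondition f α δ y) := by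
  have hG : 0 < ‖∇ f z‖ := norm_pos_iff.mpr hz
  set G := ‖∇ f z‖ with hGdef
  have h1α : 0 < 1 - α := by linarith
  set η := (1 - α) * G / 4 with hηdef
  have hη : 0 < η := by positivity
  have hc : ContinuousAt (fderiv ℝ f) z := (hf.continuous_fderiv one_ne_zero).continuousAt
  obtain ⟨r, hr, hfd⟩ := Metric.continuousAt_iff.mp hc η hη
  -- gradient deviation bound on ball z r
  have hgrad : ∀ u, dist u z < r → ‖∇ f u - ∇ f z‖ < η := by
    intro u hu
    rw [my_grad_sub_norm, ← dist_eq_norm]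
    exact hfd hu
  have hηG : η < G / 4 := by
    rw [hηdef]
    have : (1 - α) * G < 1 * G := by
      apply mul_lt_mul_of_pos_right (by linarith) hG
    linarith
  refine ⟨r / 2, by linarith, r / (8 * G), by positivity, ?_⟩
  intro y hy
  have hyr : dist y z < r := by linarith
  have hgy : ‖∇ f y - ∇ f z‖ < η := hgrad y hyr
  have habs := abs_norm_sub_norm_le (∇ f y) (∇ f z)
  obtain ⟨ha1, ha2⟩ := abs_le.mp habs
  have hlow : G / 2 ≤ ‖∇ f y‖ := by linarith
  have hhigh : ‖∇ f y‖ ≤ 2 * G := by linarith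
  refine ⟨hlow, ?_⟩
  intro δ hδ hδ'
  set g := ∇ f y with hgdef
  set b := y - δ • g with hbdef
  have hgnorm : 0 < ‖g‖ := lt_of_lt_of_le (by positivity) hlow
  have hbz : dist b z < r := by
    have h1 : dist b y = δ * ‖g‖ := by
      rw [hbdef, dist_eq_norm]
      simp [norm_smul, abs_of_pos hδ]
    have h2 : δ * ‖g‖ ≤ r / (8 * G) * (2 * G) := by
      apply mul_le_mul hδ' hhigh (norm_nonneg _) (by positivity)
    have h3 : r / (8 * G) * (2 * G) = r / 4 := by field_simp; ring
    calc dist b z ≤ dist b y + dist y z := dist_triangle _ _ _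
      _ < r / 4 + r / 2 := by rw [h1]; have := h2.trans_eq h3; linarith
      _ < r := by linarith
  -- mean value inequality on ball z r
  have hdiff : ∀ u ∈ Metric.ball z r, DifferentiableAt ℝ f u :=
    fun u _ => (hf.differentiable one_ne_zero).differentiableAt
  have hbound : ∀ u ∈ Metric.ball z r, ‖fderiv ℝ f u - fderiv ℝ f y‖ ≤ 2 * η := by
    intro u hu
    have h1 : ‖fderiv ℝ f u - fderiv ℝ f z‖ < η := by
      rw [← dist_eq_norm]; exact hfd (Metric.mem_ball.mp hu)
    have h2 : ‖fderiv ℝ f z - fderiv ℝ f y‖ < η := by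
      rw [← dist_eq_norm, dist_comm]
      exact hfd hyr
    calc ‖fderiv ℝ f u - fderiv ℝ f y‖
        ≤ ‖fderiv ℝ f u - fderiv ℝ f z‖ + ‖fderiv ℝ f z - fderiv ℝ f y‖ :=
          norm_sub_le_norm_sub_add_norm_sub _ _ _
      _ ≤ 2 * η := by linarith
  have hmvt := (convex_ball z r).norm_image_sub_le_of_norm_fderiv_le' hdiff hbound
      (Metric.mem_ball.mpr hyr) (Metric.mem_ball.mpr hbz)
  have hba : b - y = -(δ • g) := by rw [hbdef]; abel
  have hfd_app : fderiv ℝ f y (b - y) = -(δ * ‖g‖ ^ 2) := by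
    rw [hba, map_neg, map_smul, my_fderiv_apply, ← hgdef, real_inner_self_eq_norm_sq]
    simp
  have hbynorm : ‖b - y‖ = δ * ‖g‖ := by
    rw [hba, norm_neg, norm_smul, Real.norm_eq_abs, abs_of_pos hδ]
  rw [hfd_app, hbynorm] at hmvt
  have hkey : f b - f y ≤ -(δ * ‖g‖ ^ 2) + 2 * η * (δ * ‖g‖) := by
    have := abs_le.mp (by rwa [← Real.norm_eq_abs] : |f b - f y - -(δ * ‖g‖ ^ 2)| ≤ 2 * η * (δ * ‖g‖))
    linarith [this.2]
  show f b - f y ≤ -(α * δ * ‖g‖ ^ 2)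
  have h2η : 2 * η ≤ (1 - α) * ‖g‖ := by
    have : (1 - α) * (G / 2) ≤ (1 - α) * ‖g‖ := by
      apply mul_le_mul_of_nonneg_left hlow (by linarith)
    calc 2 * η = (1 - α) * (G / 2) := by rw [hηdef]; ring
      _ ≤ (1 - α) * ‖g‖ := this
  have : 2 * η * (δ * ‖g‖) ≤ (1 - α) * ‖g‖ * (δ * ‖g‖) := by
    apply mul_le_mul_of_nonneg_right h2η (by positivity)
  nlinarith [this, hkey]

section Main
variable {f : E → ℝ} {α β δ₀ : ℝ} {δsel : E → ℝ} {x : ℕ → E}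

lemma my_rate_pos (hβ0 : 0 < β) (hβ1 : β < 1) (hδ₀ : 0 < δ₀) (h : IsBacktrackingRate f α β δ₀ δsel) (y : E) :
    0 < δsel y ∧ δsel y ≤ δ₀ ∧ ArmijoCondition f α (δsel y) y := by
  obtain ⟨j, hj, harm, -⟩ := h y
  refine ⟨hj ▸ by positivity, ?_, harm⟩
  rw [hj]
  calc β ^ j * δ₀ ≤ 1 * δ₀ := by
        apply mul_le_mul_of_nonneg_right _ hδ₀.le
        exact pow_le_one₀ hβ0.le hβ1.le
    _ = δ₀ := one_mul _

lemma my_rate_lower (hβ0 : 0 < β) (hδ₀ : 0 < δ₀)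
    (h : IsBacktrackingRate f α β δ₀ δsel) {y : E} {δ' : ℝ} (hδ' : 0 < δ')
    (harm : ∀ δ, 0 < δ → δ ≤ δ' → ArmijoCondition f α δ y) :
    min δ₀ (β * δ') ≤ δsel y := by
  obtain ⟨j, hj, -, hmin⟩ := h y
  cases j with
  | zero => rw [hj]; simpa using min_le_left δ₀ (β * δ')
  | succ k =>
    have hk := hmin k (Nat.lt_succ_self k)
    have hklarge : δ' < β ^ k * δ₀ := by
      by_contra hle
      push_neg at hle
      exact hk (harm _ (by positivity) hle)
    have : β * δ' ≤ δsel y := by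
      rw [hj, pow_succ, mul_comm (β ^ k) β, mul_assoc]
      exact mul_le_mul_of_nonneg_left hklarge.le hβ0.le
    exact le_trans (min_le_right _ _) this

lemma my_descent (hβ0 : 0 < β) (hβ1 : β < 1) (hδ₀ : 0 < δ₀)
    (h : IsBacktrackingRate f α β δ₀ δsel)
    (hupd : ∀ n, x (n + 1) = x n - δsel (x n) • ∇ f (x n)) (n : ℕ) :
    f (x (n + 1)) - f (x n) ≤ -(α * δsel (x n) * ‖∇ f (x n)‖ ^ 2) := by
  obtain ⟨-, -, harm⟩ := my_rate_pos hβ0 hβ1 hδ₀ h (x n)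
  rw [hupd n]
  exact harm

lemma my_antitone (hα0 : 0 < α) (hβ0 : 0 < β) (hβ1 : β < 1) (hδ₀ : 0 < δ₀)
    (h : IsBacktrackingRate f α β δ₀ δsel)
    (hupd : ∀ n, x (n + 1) = x n - δsel (x n) • ∇ f (x n)) :
    Antitone (fun n => f (x n)) := by
  apply antitone_nat_of_succ_le
  intro n
  have h1 := my_descent hβ0 hβ1 hδ₀ h hupd n
  have h2 := (my_rate_pos hβ0 hβ1 hδ₀ h (x n)).1
  have : 0 ≤ α * δsel (x n) * ‖∇ f (x n)‖ ^ 2 := by positivity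
  show f (x (n + 1)) ≤ f (x n)
  linarith

lemma my_lower_bound (hα0 : 0 < α) (hβ0 : 0 < β) (hβ1 : β < 1) (hδ₀ : 0 < δ₀)
    (hf : ContDiff ℝ 1 f) (h : IsBacktrackingRate f α β δ₀ δsel)
    (hupd : ∀ n, x (n + 1) = x n - δsel (x n) • ∇ f (x n))
    {z : E} (hclus : MapClusterPt z atTop x) : ∀ n, f z ≤ f (x n) := by
  intro n
  by_contra hlt
  push_neg at hlt
  have hU : {y : E | f (x n) < f y} ∈ 𝓝 z :=
    (isOpen_lt continuous_const (hf.continuous)).mem_nhds hlt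
  have hfreq := (mapClusterPt_iff_frequently.mp hclus) _ hU
  obtain ⟨k, hkn, hk⟩ := (Filter.frequently_atTop.mp hfreq) n
  exact absurd (my_antitone hα0 hβ0 hβ1 hδ₀ h hupd hkn) (not_le.mpr hk)

lemma my_cluster_critical (hα0 : 0 < α) (hα1 : α < 1) (hβ0 : 0 < β) (hβ1 : β < 1)
    (hδ₀ : 0 < δ₀) (hf : ContDiff ℝ 1 f) (h : IsBacktrackingRate f α β δ₀ δsel)
    (hupd : ∀ n, x (n + 1) = x n - δsel (x n) • ∇ f (x n))
    {z : E} (hclus : MapClusterPt z atTop x) : ∇ f z = 0 := by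
  by_contra hz
  obtain ⟨ε, hε, δ', hδ', hloc⟩ := my_armijo_local hf hα0 hα1 hz
  set G := ‖∇ f z‖ with hGdef
  have hG : 0 < G := norm_pos_iff.mpr hz
  set d := min δ₀ (β * δ') with hddef
  have hd : 0 < d := lt_min hδ₀ (by positivity)
  set c := α * d * (G / 2) ^ 2 with hcdef
  have hc : 0 < c := by positivity
  -- one step in the ball decreases f by at least c
  have hstep : ∀ n, dist (x n) z < ε → f (x (n + 1)) ≤ f (x n) - c := by
    intro n hn
    obtain ⟨hlow, harm⟩ := hloc (x n) hn
    have hrate : d ≤ δsel (x n) := my_rate_lower hβ0 hδ₀ h hδ' harm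
    have hdesc := my_descent hβ0 hβ1 hδ₀ h hupd n
    have hsq : (G / 2) ^ 2 ≤ ‖∇ f (x n)‖ ^ 2 := by
      apply pow_le_pow_left₀ (by positivity) hlow
    have : c ≤ α * δsel (x n) * ‖∇ f (x n)‖ ^ 2 := by
      rw [hcdef]
      have hsel := (my_rate_pos hβ0 hβ1 hδ₀ h (x n)).1
      apply mul_le_mul (mul_le_mul_of_nonneg_left hrate hα0.le) hsq (by positivity)
      exact mul_nonneg hα0.le hsel.le
    linarith
  have hlb := my_lower_bound hα0 hβ0 hβ1 hδ₀ hf h hupd hclus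
  -- find n with x n close to z and f (x n) < f z + c
  have hV : Metric.ball z ε ∩ {y : E | f y < f z + c} ∈ 𝓝 z := by
    apply Filter.inter_mem (Metric.ball_mem_nhds z hε)
    exact (isOpen_lt (hf.continuous) continuous_const).mem_nhds (by simp [hc])
  obtain ⟨n, -, hn1, hn2⟩ := Filter.frequently_atTop.mp ((mapClusterPt_iff_frequently.mp hclus) _ hV) 0
  have := hstep n hn1
  have := hlb (n + 1)
  simp only [Set.mem_setOf_eq] at hn2
  linarith

lemma my_cross_nat {Q : ℕ → Prop} {a b : ℕ} (hab : a ≤ b) (ha : Q a) (hb : ¬ Q b) :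
    ∃ k, a ≤ k ∧ Q k ∧ ¬ Q (k + 1) := by
  by_contra hcon
  push_neg at hcon
  exact hb (Nat.le_induction ha (fun n hn ih => hcon n hn ih) b hab)

lemma my_steps_to_zero (hα0 : 0 < α) (hβ0 : 0 < β) (hβ1 : β < 1) (hδ₀ : 0 < δ₀)
    (h : IsBacktrackingRate f α β δ₀ δsel)
    (hupd : ∀ n, x (n + 1) = x n - δsel (x n) • ∇ f (x n))
    {L : ℝ} (hbd : ∀ n, L ≤ f (x n)) :
    Tendsto (fun n => dist (x (n + 1)) (x n)) atTop (𝓝 0) := by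
  set F := fun n => f (x n) with hFdef
  have hanti : Antitone F := my_antitone hα0 hβ0 hβ1 hδ₀ h hupd
  have hbdd : BddBelow (Set.range F) := ⟨L, by rintro - ⟨n, rfl⟩; exact hbd n⟩
  have htend := tendsto_atTop_ciInf hanti hbdd
  have htend' : Tendsto (fun n => F (n + 1)) atTop (𝓝 (⨅ n, F n)) :=
    (tendsto_add_atTop_iff_nat 1).mpr htend
  have hdiff : Tendsto (fun n => δ₀ / α * (F n - F (n + 1))) atTop (𝓝 0) := by
    have := (htend.sub htend').const_mul (δ₀ / α)
    simpa using this
  have hsqle : ∀ n, dist (x (n + 1)) (x n) ^ 2 ≤ δ₀ / α * (F n - F (n + 1)) := by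
    intro n
    obtain ⟨hpos, hle, -⟩ := my_rate_pos hβ0 hβ1 hδ₀ h (x n)
    have hdesc := my_descent hβ0 hβ1 hδ₀ h hupd n
    have hdist : dist (x (n + 1)) (x n) = δsel (x n) * ‖∇ f (x n)‖ := by
      rw [hupd n, dist_eq_norm]
      have : x n - δsel (x n) • ∇ f (x n) - x n = -(δsel (x n) • ∇ f (x n)) := by abel
      rw [this, norm_neg, norm_smul, Real.norm_eq_abs, abs_of_pos hpos]
    rw [hdist, mul_pow]
    have h1 : δsel (x n) ^ 2 * ‖∇ f (x n)‖ ^ 2 ≤ δ₀ * (δsel (x n) * ‖∇ f (x n)‖ ^ 2) := by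
      rw [pow_two, mul_assoc]
      apply mul_le_mul_of_nonneg_right hle (by positivity)
    have h2 : α * (δsel (x n) * ‖∇ f (x n)‖ ^ 2) ≤ F n - F (n + 1) := by
      have : α * δsel (x n) * ‖∇ f (x n)‖ ^ 2 = α * (δsel (x n) * ‖∇ f (x n)‖ ^ 2) := by ring
      rw [← this]
      linarith [hdesc]
    calc δsel (x n) ^ 2 * ‖∇ f (x n)‖ ^ 2 ≤ δ₀ * (δsel (x n) * ‖∇ f (x n)‖ ^ 2) := h1
      _ ≤ δ₀ / α * (F n - F (n + 1)) := by
          rw [div_mul_eq_mul_div, le_div_iff₀ hα0]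
          calc δ₀ * (δsel (x n) * ‖∇ f (x n)‖ ^ 2) * α
              = δ₀ * (α * (δsel (x n) * ‖∇ f (x n)‖ ^ 2)) := by ring
            _ ≤ δ₀ * (F n - F (n + 1)) := by
                apply mul_le_mul_of_nonneg_left h2 hδ₀.le
  have hsq : Tendsto (fun n => dist (x (n + 1)) (x n) ^ 2) atTop (𝓝 0) :=
    squeeze_zero (fun n => by positivity) hsqle hdiff
  have := (Real.continuous_sqrt.tendsto 0).comp hsq
  simpa [Function.comp_def, Real.sqrt_sq dist_nonneg] using this

lemma my_sphere_cluster [ProperSpace E] {z : E} {ε r : ℝ}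
    (hr0 : 0 < r) (hrε : r < ε)
    (hsmall : ∀ s, 0 < s → ∃ᶠ n in atTop, dist (x n) z < s)
    (hbig : ∃ᶠ n in atTop, ε ≤ dist (x n) z)
    (hstep : Tendsto (fun n => dist (x (n + 1)) (x n)) atTop (𝓝 0)) :
    ∃ w, MapClusterPt w atTop x ∧ dist w z = r := by
  have hfreq : ∀ η, 0 < η → ∀ N, ∃ n, N ≤ n ∧ r ≤ dist (x n) z ∧ dist (x n) z < r + η := by
    intro η hη N
    obtain ⟨N', hN'⟩ := eventually_atTop.mp (hstep.eventually (gt_mem_nhds hη))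
    obtain ⟨a, ha, haQ⟩ := frequently_atTop.mp (hsmall r hr0) (max N N')
    obtain ⟨b, hb, hbQ⟩ := frequently_atTop.mp hbig a
    have hnb : ¬ dist (x b) z < r := not_lt.mpr (le_trans hrε.le hbQ)
    obtain ⟨k, hak, hQk, hQk1⟩ := my_cross_nat (Q := fun k => dist (x k) z < r) hb haQ hnb
    refine ⟨k + 1, ?_, not_lt.mp hQk1, ?_⟩
    · have := le_trans (le_max_left N N') (ha.trans hak)
      omega
    · have hkN' : N' ≤ k := le_trans (le_max_right N N') (ha.trans hak)
      calc dist (x (k + 1)) z ≤ dist (x (k + 1)) (x k) + dist (x k) z := dist_triangle _ _ _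
        _ < η + r := add_lt_add (hN' k hkN') hQk
        _ = r + η := by ring
  have hsel : ∀ j : ℕ, ∃ n, j ≤ n ∧ r ≤ dist (x n) z ∧ dist (x n) z < r + 1 / (j + 1) :=
    fun j => hfreq (1 / (j + 1)) (by positivity) j
  choose n hn1 hn2 hn3 using hsel
  have hmem : ∀ j, x (n j) ∈ Metric.closedBall z (r + 1) := by
    intro j
    rw [Metric.mem_closedBall]
    have : (1 : ℝ) / (j + 1) ≤ 1 := by
      rw [div_le_one (by positivity)]
      linarith [Nat.cast_nonneg (α := ℝ) j]
    linarith [hn3 j]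
  obtain ⟨w, -, φ, hφ, hconv⟩ :=
    tendsto_subseq_of_bounded Metric.isBounded_closedBall hmem
  have hnφ : Tendsto (fun j => n (φ j)) atTop atTop :=
    tendsto_atTop_mono (fun j => le_trans (hφ.id_le j) (hn1 (φ j))) tendsto_id
  have hconv' : Tendsto (x ∘ fun j => n (φ j)) atTop (𝓝 w) := hconv
  refine ⟨w, MapClusterPt.of_comp hnφ hconv'.mapClusterPt, ?_⟩
  have hd : Tendsto (fun j => dist (x (n (φ j))) z) atTop (𝓝 (dist w z)) :=
    hconv.dist tendsto_const_nhds
  have hup : Tendsto (fun j : ℕ => r + 1 / ((φ j : ℝ) + 1)) atTop (𝓝 (r + 0)) := by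
    apply Tendsto.const_add
    exact tendsto_one_div_add_atTop_nhds_zero_nat.comp hφ.tendsto_atTop
  rw [add_zero] at hup
  have hlim : Tendsto (fun j => dist (x (n (φ j))) z) atTop (𝓝 r) :=
    tendsto_of_tendsto_of_tendsto_of_le_of_le tendsto_const_nhds hup
      (fun j => hn2 (φ j)) (fun j => (hn3 (φ j)).le)
  exact tendsto_nhds_unique hd hlim

lemma my_converges [ProperSpace E]
    (hf : ContDiff ℝ 1 f) (hcount : {y : E | ∇ f y = 0}.Countable)
    (hα0 : 0 < α) (hα1 : α < 1) (hβ0 : 0 < β) (hβ1 : β < 1) (hδ₀ : 0 < δ₀)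
    (h : IsBacktrackingRate f α β δ₀ δsel)
    (hupd : ∀ n, x (n + 1) = x n - δsel (x n) • ∇ f (x n))
    (hnc : ¬ Tendsto x atTop (cocompact E)) :
    ∃ p, ∇ f p = 0 ∧ Tendsto x atTop (𝓝 p) := by
  -- a compact set visited frequently
  rw [hasBasis_cocompact.tendsto_right_iff] at hnc
  push_neg at hnc
  obtain ⟨K, hK, hfreqK⟩ := hnc
  have hfreqK' : ∃ᶠ n in atTop, x n ∈ K := by
    apply hfreqK.mono
    intro n hn
    simpa using hn
  -- a cluster point z ∈ K
  have hneb : (atTop ⊓ 𝓟 {n | x n ∈ K}).NeBot := frequently_mem_iff_neBot.mp hfreqK'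
  obtain ⟨z, -, hzc⟩ := hK.exists_mapClusterPt (f := atTop ⊓ 𝓟 {n | x n ∈ K}) (u := x)
    (by
      calc Filter.map x (atTop ⊓ 𝓟 {n | x n ∈ K}) ≤ Filter.map x (𝓟 {n | x n ∈ K}) :=
            Filter.map_mono inf_le_right
        _ = 𝓟 (x '' {n | x n ∈ K}) := Filter.map_principal
        _ ≤ 𝓟 K := by
            rw [Filter.principal_mono]
            rintro - ⟨n, hn, rfl⟩
            exact hn)
  have hzclus : MapClusterPt z atTop x := hzc.clusterPt.mono (Filter.map_mono inf_le_left)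
  have hzcrit : ∇ f z = 0 := my_cluster_critical hα0 hα1 hβ0 hβ1 hδ₀ hf h hupd hzclus
  refine ⟨z, hzcrit, ?_⟩
  have hlb := my_lower_bound hα0 hβ0 hβ1 hδ₀ hf h hupd hzclus
  have hstep0 := my_steps_to_zero hα0 hβ0 hβ1 hδ₀ h hupd hlb
  have hsmall : ∀ s, 0 < s → ∃ᶠ n in atTop, dist (x n) z < s := by
    intro s hs
    have := (mapClusterPt_iff_frequently.mp hzclus) (Metric.ball z s) (Metric.ball_mem_nhds z hs)
    apply this.mono
    intro n hn
    exact Metric.mem_ball.mp hn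
  by_contra hnot
  rw [Metric.tendsto_atTop] at hnot
  push_neg at hnot
  obtain ⟨ε, hε, hbigN⟩ := hnot
  have hbig : ∃ᶠ n in atTop, ε ≤ dist (x n) z := by
    rw [frequently_atTop]
    intro N
    obtain ⟨n, hn1, hn2⟩ := hbigN N
    exact ⟨n, hn1, hn2⟩
  have hmap : ∀ r ∈ Set.Ioo (0 : ℝ) ε, ∃ w, ∇ f w = 0 ∧ dist w z = r := by
    rintro r ⟨hr0, hrε⟩
    obtain ⟨w, hwc, hwd⟩ := my_sphere_cluster hr0 hrε hsmall hbig hstep0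
    exact ⟨w, my_cluster_critical hα0 hα1 hβ0 hβ1 hδ₀ hf h hupd hwc, hwd⟩
  choose! W hW1 hW2 using hmap
  have hinj : Set.InjOn W (Set.Ioo 0 ε) := by
    intro r hr s hs heq
    rw [← hW2 r hr, ← hW2 s hs, heq]
  have hmapsto : Set.MapsTo W (Set.Ioo 0 ε) {y | ∇ f y = 0} := fun r hr => hW1 r hr
  have hcnt : (Set.Ioo (0 : ℝ) ε).Countable := hmapsto.countable_of_injOn hinj hcount
  have h1 := hcnt.le_aleph0
  rw [Cardinal.mk_Ioo_real hε] at h1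
  exact absurd h1 Cardinal.aleph0_lt_continuum.not_ge


end Main

/-- Let `f : ℝ^m → ℝ` be `C¹` with at most countably many critical points,
`α, β ∈ (0,1)`, `δ₀ > 0`, and `(x n)` the backtracking gradient descent sequence from an
arbitrary initial point. Then either `(x n)` converges to a critical point of `f`, or `(x n)`
diverges to infinity (tends to the cocompact filter). If moreover `f` has compact sublevel
sets, then `(x n)` converges to a critical point of `f`. -/
theorem backtracking_GD_converges_or_diverges
    {m : ℕ} (f : EuclideanSpace ℝ (Fin m) → ℝ) (hf : ContDiff ℝ 1 f)
    (hcount : {y : EuclideanSpace ℝ (Fin m) | ∇ f y = 0}.Countable)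
    (α β δ₀ : ℝ) (hα0 : 0 < α) (hα1 : α < 1) (hβ0 : 0 < β) (hβ1 : β < 1) (hδ₀ : 0 < δ₀)
    (δsel : EuclideanSpace ℝ (Fin m) → ℝ) (hδsel : IsBacktrackingRate f α β δ₀ δsel)
    (x : ℕ → EuclideanSpace ℝ (Fin m))
    (hupd : ∀ n, x (n + 1) = x n - δsel (x n) • ∇ f (x n)) :
    ((∃ p, ∇ f p = 0 ∧ Filter.Tendsto x Filter.atTop (nhds p)) ∨
      Filter.Tendsto x Filter.atTop (Filter.cocompact (EuclideanSpace ℝ (Fin m)))) ∧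
    ((∀ c : ℝ, IsCompact {y | f y ≤ c}) →
      ∃ p, ∇ f p = 0 ∧ Filter.Tendsto x Filter.atTop (nhds p)) := by
  classical
  have hmain : ¬ Filter.Tendsto x Filter.atTop (Filter.cocompact (EuclideanSpace ℝ (Fin m))) →
      ∃ p, ∇ f p = 0 ∧ Filter.Tendsto x Filter.atTop (nhds p) := fun hnc =>
    my_converges hf hcount hα0 hα1 hβ0 hβ1 hδ₀ hδsel hupd hnc
  constructor
  · by_cases hc : Filter.Tendsto x Filter.atTop (Filter.cocompact (EuclideanSpace ℝ (Fin m)))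
    · exact Or.inr hc
    · exact Or.inl (hmain hc)
  · intro hcomp
    apply hmain
    intro htd
    have hK := hcomp (f (x 0))
    have hev := (Filter.hasBasis_cocompact.tendsto_right_iff.mp htd) _ hK
    obtain ⟨N, hN⟩ := Filter.eventually_atTop.mp hev
    apply hN N le_rfl
    simp only [Set.mem_compl_iff, Set.mem_setOf_eq, not_not]
    exact my_antitone hα0 hβ0 hβ1 hδ₀ hδsel hupd (Nat.zero_le N)
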